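/- Let 0 < α < β < ∞, let b : [0,∞) → ℝ be continuous with b(a) = 0 for a ∉ [α,β], and let μ : [0,∞) → ℝ be continuous and nonnegative. For Δ > 0 define the inherent net reproductive number of the associated Leslie matrix model G(Δ) = Δ·∑_{i=q}^{s−1} b(iΔ)·exp(−Δ·∑_{j=0}^{i−1} μ(jΔ)), where q = ⌊α/Δ⌋ and s = ⌊β/Δ⌋. Then G(Δ) → r = ∫_α^β b(c)·exp(−∫₀^c μ(s) ds) dc as Δ → 0⁺; that is, in the limit of vanishing age-class length, the inherent net reproductive number of the Leslie discrete model converges to the Lotka growth rate. -/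

import Mathlib

open MeasureTheory Real Set Filter

lemma aux_exp_lip {x y : ℝ} (hx : 0 ≤ x) (hy : 0 ≤ y) :
    |Real.exp (-x) - Real.exp (-y)| ≤ |x - y| := by
  wlog h : x ≤ y generalizing x y
  · rw [abs_sub_comm, abs_sub_comm x y]
    exact this hy hx (le_of_not_ge h)
  have h1 : Real.exp (-y) ≤ Real.exp (-x) := Real.exp_le_exp.2 (by linarith)
  rw [abs_of_nonneg (by linarith), abs_of_nonpos (by linarith : x - y ≤ 0)]
  have h2 : Real.exp (-y) = Real.exp (-x) * Real.exp (-(y - x)) := by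
    rw [← Real.exp_add]; ring_nf
  have h3 : 1 + -(y - x) ≤ Real.exp (-(y - x)) := by
    have := Real.add_one_le_exp (-(y - x)); linarith
  have h4 : Real.exp (-x) ≤ 1 := Real.exp_le_one_iff.2 (by linarith)
  nlinarith [Real.exp_pos (-x)]

set_option maxHeartbeats 1000000 in
theorem leslie_net_reproductive_number_tendsto_lotka_growth_rate
    (α β : ℝ) (hα : 0 < α) (hαβ : α < β)
    (b : ℝ → ℝ) (hbc : Continuous b) (hbsupp : ∀ a, a ∉ Set.Icc α β → b a = 0)
    (μ : ℝ → ℝ) (hμc : Continuous μ) (hμ0 : ∀ x, 0 ≤ μ x)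
    (G : ℝ → ℝ)
    (hG : ∀ Δ : ℝ, 0 < Δ →
      G Δ = Δ * ∑ i ∈ Finset.Ico (⌊α / Δ⌋).toNat (⌊β / Δ⌋).toNat,
        b ((i : ℝ) * Δ) *
          Real.exp (-(Δ * ∑ j ∈ Finset.range i, μ ((j : ℝ) * Δ))))
    (r : ℝ)
    (hr : r = ∫ c in α..β, b c * Real.exp (-(∫ s in (0:ℝ)..c, μ s))) :
    Filter.Tendsto G (nhdsWithin 0 (Set.Ioi 0)) (nhds r) := by
  have hβ : 0 < β := hα.trans hαβ
  obtain ⟨F, hFdef⟩ : ∃ F : ℝ → ℝ, F = fun c => b c * Real.exp (-(∫ s in (0:ℝ)..c, μ s)) :=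
    ⟨_, rfl⟩
  have hμint : ∀ u v : ℝ, IntervalIntegrable μ volume u v := fun u v =>
    hμc.intervalIntegrable u v
  have hIcont : Continuous fun c => ∫ s in (0:ℝ)..c, μ s :=
    intervalIntegral.continuous_primitive hμint 0
  have hFcont : Continuous F := by
    rw [hFdef]; exact hbc.mul (Real.continuous_exp.comp hIcont.neg)
  have hFint : ∀ u v : ℝ, IntervalIntegrable F volume u v := fun u v =>
    hFcont.intervalIntegrable u v
  -- b vanishes at α (by continuity from the left)
  have hbα : b α = 0 := by
    have h1 : Tendsto b (nhdsWithin α (Set.Iio α)) (nhds (b α)) :=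
      (hbc.tendsto α).mono_left nhdsWithin_le_nhds
    have h2 : Tendsto b (nhdsWithin α (Set.Iio α)) (nhds 0) := by
      refine Tendsto.congr' ?_ tendsto_const_nhds
      filter_upwards [self_mem_nhdsWithin] with x hx
      exact (hbsupp x fun hmem => absurd hmem.1 (not_le.2 hx)).symm
    exact tendsto_nhds_unique h1 h2
  have hF0 : ∀ x ≤ α, F x = 0 := by
    intro x hx
    rcases eq_or_lt_of_le hx with h | h
    · subst h; simp [hFdef, hbα]
    · simp [hFdef, hbsupp x fun hmem => absurd hmem.1 (not_le.2 h)]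
  have hr0 : r = ∫ c in (0:ℝ)..β, F c := by
    rw [hr]
    have hrF : (∫ c in α..β, b c * Real.exp (-(∫ s in (0:ℝ)..c, μ s))) = ∫ c in α..β, F c := by
      rw [hFdef]
    rw [hrF]
    have h1 : (∫ c in (0:ℝ)..α, F c) = 0 := by
      rw [intervalIntegral.integral_congr (g := fun _ => (0:ℝ))
        (fun x hx => hF0 x (by rw [Set.uIcc_of_le hα.le] at hx; exact hx.2)),
        intervalIntegral.integral_zero]
    rw [← intervalIntegral.integral_add_adjacent_intervals (hFint 0 α) (hFint α β), h1,
      zero_add]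
  obtain ⟨B, hB⟩ :=
    (isCompact_Icc (a := (0:ℝ)) (b := β)).exists_bound_of_continuousOn hbc.continuousOn
  have hB0 : 0 ≤ B := le_trans (norm_nonneg _) (hB 0 ⟨le_refl _, hβ.le⟩)
  have hInn : ∀ x : ℝ, 0 ≤ x → 0 ≤ ∫ s in (0:ℝ)..x, μ s := fun x hx =>
    intervalIntegral.integral_nonneg hx fun u _ => hμ0 u
  have hFB : ∀ x ∈ Set.Icc (0:ℝ) β, |F x| ≤ B := by
    intro x hx
    have he : Real.exp (-(∫ s in (0:ℝ)..x, μ s)) ≤ 1 :=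
      Real.exp_le_one_iff.2 (by linarith [hInn x hx.1])
    calc |F x| = |b x| * Real.exp (-(∫ s in (0:ℝ)..x, μ s)) := by
          rw [hFdef]; rw [abs_mul, abs_of_pos (Real.exp_pos _)]
      _ ≤ B * 1 := mul_le_mul (hB x hx) he (Real.exp_pos _).le hB0
      _ = B := mul_one B
  rw [Metric.tendsto_nhdsWithin_nhds]
  intro ε hε
  obtain ⟨εμ, hεμdef⟩ : ∃ x : ℝ, x = ε / (4 * (β + 1) * (B * β + 1)) := ⟨_, rfl⟩
  obtain ⟨εF, hεFdef⟩ : ∃ x : ℝ, x = ε / (4 * (β + 1)) := ⟨_, rfl⟩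
  have hεμ : 0 < εμ := by
    rw [hεμdef]; apply div_pos hε; nlinarith [mul_nonneg hB0 hβ.le]
  have hεF : 0 < εF := by
    rw [hεFdef]; apply div_pos hε; nlinarith
  obtain ⟨δμ, hδμ0, hδμ⟩ := Metric.uniformContinuousOn_iff.1
    ((isCompact_Icc (a := (0:ℝ)) (b := β)).uniformContinuousOn_of_continuous
      hμc.continuousOn) εμ hεμ
  obtain ⟨δF, hδF0, hδF⟩ := Metric.uniformContinuousOn_iff.1
    ((isCompact_Icc (a := (0:ℝ)) (b := β)).uniformContinuousOn_of_continuous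
      hFcont.continuousOn) εF hεF
  refine ⟨min (min δμ δF) (ε / (2 * (B + 1))), by positivity, ?_⟩
  intro Δ hΔmem hΔdist
  have hΔ : 0 < Δ := hΔmem
  rw [Real.dist_eq, sub_zero, abs_of_pos hΔ] at hΔdist
  have hΔδμ : Δ < δμ := lt_of_lt_of_le hΔdist (le_trans (min_le_left _ _) (min_le_left _ _))
  have hΔδF : Δ < δF := lt_of_lt_of_le hΔdist (le_trans (min_le_left _ _) (min_le_right _ _))
  have hΔε : Δ < ε / (2 * (B + 1)) := lt_of_lt_of_le hΔdist (min_le_right _ _)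
  obtain ⟨q, hqdef⟩ : ∃ n : ℕ, n = (⌊α / Δ⌋).toNat := ⟨_, rfl⟩
  obtain ⟨s, hsdef⟩ : ∃ n : ℕ, n = (⌊β / Δ⌋).toNat := ⟨_, rfl⟩
  have hqcast : (q : ℝ) = (⌊α / Δ⌋ : ℤ) := by
    have h := Int.toNat_of_nonneg (Int.floor_nonneg.2 (show (0:ℝ) ≤ α / Δ by positivity))
    rw [hqdef]; exact_mod_cast h
  have hscast : (s : ℝ) = (⌊β / Δ⌋ : ℤ) := by
    have h := Int.toNat_of_nonneg (Int.floor_nonneg.2 (show (0:ℝ) ≤ β / Δ by positivity))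
    rw [hsdef]; exact_mod_cast h
  have hsβ : (s : ℝ) * Δ ≤ β := by
    have := Int.floor_le (β / Δ)
    rw [← hscast] at this
    calc (s : ℝ) * Δ ≤ (β / Δ) * Δ := mul_le_mul_of_nonneg_right this hΔ.le
      _ = β := div_mul_cancel₀ β hΔ.ne'
  have hsβ' : β - Δ < (s : ℝ) * Δ := by
    have h1 := Int.lt_floor_add_one (β / Δ)
    rw [← hscast] at h1
    have h3 : β < ((s : ℝ) + 1) * Δ := (div_lt_iff₀ hΔ).1 h1
    have h4 : ((s : ℝ) + 1) * Δ = (s : ℝ) * Δ + Δ := by ring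
    linarith
  have hqα : (q : ℝ) * Δ ≤ α := by
    have := Int.floor_le (α / Δ)
    rw [← hqcast] at this
    calc (q : ℝ) * Δ ≤ (α / Δ) * Δ := mul_le_mul_of_nonneg_right this hΔ.le
      _ = α := div_mul_cancel₀ α hΔ.ne'
  have hqs : q ≤ s := by
    rw [hqdef, hsdef]; exact Int.toNat_le_toNat (Int.floor_le_floor (by gcongr))
  obtain ⟨g, hgdef⟩ : ∃ g : ℕ → ℝ, g = fun i : ℕ =>
      b ((i : ℝ) * Δ) * Real.exp (-(Δ * ∑ j ∈ Finset.range i, μ ((j : ℝ) * Δ))) := ⟨_, rfl⟩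
  have hgi : ∀ i : ℕ,
      g i = b ((i : ℝ) * Δ) * Real.exp (-(Δ * ∑ j ∈ Finset.range i, μ ((j : ℝ) * Δ))) :=
    fun i => by rw [hgdef]
  obtain ⟨K, hKdef⟩ : ∃ x : ℝ, x = B * (β * εμ) + εF := ⟨_, rfl⟩
  have hK0 : 0 ≤ K := by
    have : 0 ≤ B * (β * εμ) := mul_nonneg hB0 (mul_nonneg hβ.le hεμ.le)
    rw [hKdef]; linarith
  -- the inner Riemann sum approximates the primitive of μ
  have hM : ∀ i : ℕ, i ≤ s →
      |Δ * ∑ j ∈ Finset.range i, μ ((j : ℝ) * Δ) - ∫ t in (0:ℝ)..((i : ℝ) * Δ), μ t| ≤ β * εμ := by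
    intro i hi
    have hiβ : (i : ℝ) * Δ ≤ β :=
      (mul_le_mul_of_nonneg_right (Nat.cast_le.2 hi : (i:ℝ) ≤ s) hΔ.le).trans hsβ
    have hadj : ∑ j ∈ Finset.range i, ∫ t in ((j : ℝ) * Δ)..(((j : ℝ) + 1) * Δ), μ t
        = ∫ t in (0:ℝ)..((i : ℝ) * Δ), μ t := by
      have h := intervalIntegral.sum_integral_adjacent_intervals
        (a := fun k : ℕ => (k : ℝ) * Δ) (n := i) fun k _ => hμint _ _
      simp only [Nat.cast_zero, zero_mul, Nat.cast_add, Nat.cast_one] at h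
      exact h
    have hsplit : Δ * ∑ j ∈ Finset.range i, μ ((j : ℝ) * Δ) - ∫ t in (0:ℝ)..((i : ℝ) * Δ), μ t
        = ∑ j ∈ Finset.range i,
          (Δ * μ ((j : ℝ) * Δ) - ∫ t in ((j : ℝ) * Δ)..(((j : ℝ) + 1) * Δ), μ t) := by
      rw [Finset.sum_sub_distrib, ← Finset.mul_sum, hadj]
    rw [hsplit]
    have hterm : ∀ j ∈ Finset.range i,
        |Δ * μ ((j : ℝ) * Δ) - ∫ t in ((j : ℝ) * Δ)..(((j : ℝ) + 1) * Δ), μ t| ≤ εμ * Δ := by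
      intro j hj
      rw [Finset.mem_range] at hj
      have hj1 : ((j : ℝ) + 1) * Δ ≤ (i : ℝ) * Δ :=
        mul_le_mul_of_nonneg_right
          (by exact_mod_cast Nat.succ_le_of_lt hj : (j:ℝ) + 1 ≤ (i:ℝ)) hΔ.le
      have hjexp : ((j : ℝ) + 1) * Δ = (j : ℝ) * Δ + Δ := by ring
      have hle : (j : ℝ) * Δ ≤ ((j : ℝ) + 1) * Δ := by linarith [hjexp, hΔ.le]
      have hconst : Δ * μ ((j : ℝ) * Δ)
          = ∫ _t in ((j : ℝ) * Δ)..(((j : ℝ) + 1) * Δ), μ ((j : ℝ) * Δ) := by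
        rw [intervalIntegral.integral_const, smul_eq_mul]; ring
      rw [hconst, ← intervalIntegral.integral_sub intervalIntegrable_const (hμint _ _)]
      have hbd : ∀ t ∈ Set.uIoc ((j : ℝ) * Δ) (((j : ℝ) + 1) * Δ),
          ‖μ ((j : ℝ) * Δ) - μ t‖ ≤ εμ := by
        intro t ht
        rw [Set.uIoc_of_le hle] at ht
        have ht1 : (j : ℝ) * Δ < t := ht.1
        have ht2 : t ≤ ((j : ℝ) + 1) * Δ := ht.2
        have htβ : t ≤ β := le_trans ht2 (hj1.trans hiβ)
        have ht0 : 0 ≤ t := le_trans (by positivity) ht1.le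
        have hjmem : (j : ℝ) * Δ ∈ Set.Icc (0:ℝ) β :=
          ⟨by positivity, le_trans (by linarith [hjexp, hΔ.le]) hiβ⟩
        have hd : dist ((j : ℝ) * Δ) t < δμ := by
          rw [Real.dist_eq]
          have habs : |(j : ℝ) * Δ - t| ≤ Δ := by
            rw [abs_le]; constructor <;> linarith [hjexp]
          linarith
        rw [Real.norm_eq_abs, ← Real.dist_eq]
        exact (hδμ _ hjmem t ⟨ht0, htβ⟩ hd).le
      have hib := intervalIntegral.norm_integral_le_of_norm_le_const hbd
      rw [Real.norm_eq_abs] at hib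
      have habs : |((j : ℝ) + 1) * Δ - (j : ℝ) * Δ| = Δ := by
        rw [abs_of_nonneg (by linarith [hjexp, hΔ.le])]; ring
      rwa [habs] at hib
    calc |∑ j ∈ Finset.range i,
          (Δ * μ ((j : ℝ) * Δ) - ∫ t in ((j : ℝ) * Δ)..(((j : ℝ) + 1) * Δ), μ t)|
        ≤ ∑ j ∈ Finset.range i,
          |Δ * μ ((j : ℝ) * Δ) - ∫ t in ((j : ℝ) * Δ)..(((j : ℝ) + 1) * Δ), μ t| :=
          Finset.abs_sum_le_sum_abs _ _
      _ ≤ ∑ _j ∈ Finset.range i, εμ * Δ := Finset.sum_le_sum hterm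
      _ = (i : ℝ) * (εμ * Δ) := by rw [Finset.sum_const, Finset.card_range, nsmul_eq_mul]
      _ = (i : ℝ) * Δ * εμ := by ring
      _ ≤ β * εμ := mul_le_mul_of_nonneg_right hiβ hεμ.le
  -- per-interval comparison of the Riemann sum with the integral of F
  have key : ∀ i ∈ Finset.range s,
      |Δ * g i - ∫ c in ((i : ℝ) * Δ)..(((i : ℝ) + 1) * Δ), F c| ≤ K * Δ := by
    intro i hi
    rw [Finset.mem_range] at hi
    have hi1s : (i : ℝ) + 1 ≤ (s : ℝ) := by exact_mod_cast Nat.succ_le_of_lt hi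
    have hiexp : ((i : ℝ) + 1) * Δ = (i : ℝ) * Δ + Δ := by ring
    have hi1β : ((i : ℝ) + 1) * Δ ≤ β :=
      le_trans (mul_le_mul_of_nonneg_right hi1s hΔ.le) hsβ
    have hle : (i : ℝ) * Δ ≤ ((i : ℝ) + 1) * Δ := by linarith [hiexp, hΔ.le]
    have hiβ : (i : ℝ) * Δ ≤ β := hle.trans hi1β
    have hi0 : 0 ≤ (i : ℝ) * Δ := by positivity
    obtain ⟨M, hMdef⟩ : ∃ x : ℝ, x = Δ * ∑ j ∈ Finset.range i, μ ((j : ℝ) * Δ) := ⟨_, rfl⟩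
    have hM0 : 0 ≤ M := by
      rw [hMdef]; exact mul_nonneg hΔ.le (Finset.sum_nonneg fun j _ => hμ0 _)
    obtain ⟨I, hIdef⟩ : ∃ x : ℝ, x = ∫ t in (0:ℝ)..((i : ℝ) * Δ), μ t := ⟨_, rfl⟩
    have hI0 : 0 ≤ I := by rw [hIdef]; exact hInn _ hi0
    have hexp : |Real.exp (-M) - Real.exp (-I)| ≤ β * εμ := by
      refine (aux_exp_lip hM0 hI0).trans ?_
      rw [hMdef, hIdef]; exact hM i hi.le
    have hpt : ∀ c ∈ Set.uIoc ((i : ℝ) * Δ) (((i : ℝ) + 1) * Δ),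
        ‖b ((i : ℝ) * Δ) * Real.exp (-M) - F c‖ ≤ K := by
      intro c hc
      rw [Set.uIoc_of_le hle] at hc
      have hc1 : (i : ℝ) * Δ < c := hc.1
      have hc2 : c ≤ ((i : ℝ) + 1) * Δ := hc.2
      have hc0 : 0 ≤ c := le_trans hi0 hc1.le
      have hcβ : c ≤ β := hc2.trans hi1β
      have heq : b ((i : ℝ) * Δ) * Real.exp (-M) - F c
          = b ((i : ℝ) * Δ) * (Real.exp (-M) - Real.exp (-I)) + (F ((i : ℝ) * Δ) - F c) := by
        rw [hFdef, hIdef]; ring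
      rw [Real.norm_eq_abs, heq]
      have h1 : |b ((i : ℝ) * Δ) * (Real.exp (-M) - Real.exp (-I))| ≤ B * (β * εμ) := by
        rw [abs_mul]
        have hb1 : |b ((i : ℝ) * Δ)| ≤ B := hB _ ⟨hi0, hiβ⟩
        exact mul_le_mul hb1 hexp (abs_nonneg _) hB0
      have h2 : |F ((i : ℝ) * Δ) - F c| ≤ εF := by
        have hd : dist ((i : ℝ) * Δ) c < δF := by
          rw [Real.dist_eq]
          have : |(i : ℝ) * Δ - c| ≤ Δ := by
            rw [abs_le]; constructor <;> linarith [hiexp]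
          linarith
        have := hδF _ ⟨hi0, hiβ⟩ c ⟨hc0, hcβ⟩ hd
        rw [Real.dist_eq] at this
        exact this.le
      calc |b ((i : ℝ) * Δ) * (Real.exp (-M) - Real.exp (-I)) + (F ((i : ℝ) * Δ) - F c)|
          ≤ |b ((i : ℝ) * Δ) * (Real.exp (-M) - Real.exp (-I))| + |F ((i : ℝ) * Δ) - F c| :=
            abs_add_le _ _
        _ ≤ K := by rw [hKdef]; exact add_le_add h1 h2
    have hconst : Δ * g i
        = ∫ _c in ((i : ℝ) * Δ)..(((i : ℝ) + 1) * Δ), b ((i : ℝ) * Δ) * Real.exp (-M) := by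
      rw [intervalIntegral.integral_const, smul_eq_mul, hgi i, hMdef]; ring
    rw [hconst, ← intervalIntegral.integral_sub intervalIntegrable_const (hFint _ _)]
    have hn := intervalIntegral.norm_integral_le_of_norm_le_const hpt
    rw [Real.norm_eq_abs] at hn
    have habs : |((i : ℝ) + 1) * Δ - (i : ℝ) * Δ| = Δ := by
      rw [abs_of_nonneg (by linarith [hle])]; ring
    rwa [habs] at hn
  -- sum the interval integrals of F
  have hadjF : ∑ i ∈ Finset.range s, ∫ c in ((i : ℝ) * Δ)..(((i : ℝ) + 1) * Δ), F c
      = ∫ c in (0:ℝ)..((s : ℝ) * Δ), F c := by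
    have h := intervalIntegral.sum_integral_adjacent_intervals
      (a := fun k : ℕ => (k : ℝ) * Δ) (n := s) fun k _ => hFint _ _
    simp only [Nat.cast_zero, zero_mul, Nat.cast_add, Nat.cast_one] at h
    exact h
  -- drop the vanishing initial terms
  have hA : Δ * ∑ i ∈ Finset.Ico q s, g i = ∑ i ∈ Finset.range s, Δ * g i := by
    rw [Finset.mul_sum]
    have h0 : ∑ i ∈ Finset.Ico 0 q, Δ * g i = 0 := by
      refine Finset.sum_eq_zero fun i hi => ?_
      rw [Finset.mem_Ico] at hi
      have hlt : (i : ℝ) * Δ < α := by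
        have h1 : (i : ℝ) + 1 ≤ (q : ℝ) := by exact_mod_cast Nat.succ_le_of_lt hi.2
        have h2 : ((i : ℝ) + 1) * Δ ≤ (q : ℝ) * Δ := mul_le_mul_of_nonneg_right h1 hΔ.le
        have h3 : ((i : ℝ) + 1) * Δ = (i : ℝ) * Δ + Δ := by ring
        linarith
      have hb0 : b ((i : ℝ) * Δ) = 0 := hbsupp _ fun hmem => absurd hmem.1 (not_le.2 hlt)
      rw [hgi i, hb0]; ring
    rw [Finset.range_eq_Ico, ← Finset.sum_Ico_consecutive _ (Nat.zero_le q) hqs, h0, zero_add]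
  -- assemble
  rw [Real.dist_eq, hG Δ hΔ, ← hqdef, ← hsdef]
  have hsumg : ∑ i ∈ Finset.Ico q s,
      b ((i : ℝ) * Δ) * Real.exp (-(Δ * ∑ j ∈ Finset.range i, μ ((j : ℝ) * Δ)))
      = ∑ i ∈ Finset.Ico q s, g i :=
    Finset.sum_congr rfl fun i _ => (hgi i).symm
  rw [hsumg]
  have hGr : Δ * ∑ i ∈ Finset.Ico q s, g i - r
      = (∑ i ∈ Finset.range s, (Δ * g i - ∫ c in ((i : ℝ) * Δ)..(((i : ℝ) + 1) * Δ), F c))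
        + ((∫ c in (0:ℝ)..((s : ℝ) * Δ), F c) - r) := by
    rw [hA, Finset.sum_sub_distrib, hadjF]; ring
  have hterm1 : |∑ i ∈ Finset.range s,
      (Δ * g i - ∫ c in ((i : ℝ) * Δ)..(((i : ℝ) + 1) * Δ), F c)| ≤ β * K := by
    calc |∑ i ∈ Finset.range s, (Δ * g i - ∫ c in ((i : ℝ) * Δ)..(((i : ℝ) + 1) * Δ), F c)|
        ≤ ∑ i ∈ Finset.range s, |Δ * g i - ∫ c in ((i : ℝ) * Δ)..(((i : ℝ) + 1) * Δ), F c| :=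
          Finset.abs_sum_le_sum_abs _ _
      _ ≤ ∑ _i ∈ Finset.range s, K * Δ := Finset.sum_le_sum key
      _ = (s : ℝ) * (K * Δ) := by rw [Finset.sum_const, Finset.card_range, nsmul_eq_mul]
      _ = (s : ℝ) * Δ * K := by ring
      _ ≤ β * K := mul_le_mul_of_nonneg_right hsβ hK0
  have hterm2 : |(∫ c in (0:ℝ)..((s : ℝ) * Δ), F c) - r| ≤ (B + 1) * Δ := by
    rw [hr0, intervalIntegral.integral_interval_sub_left (hFint 0 _) (hFint 0 β)]
    have hbd : ∀ c ∈ Set.uIoc β ((s : ℝ) * Δ), ‖F c‖ ≤ B := by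
      intro c hc
      rw [Set.uIoc_comm, Set.uIoc_of_le hsβ] at hc
      have hs0 : (0:ℝ) ≤ (s : ℝ) * Δ := by positivity
      exact hFB c ⟨le_trans hs0 hc.1.le, hc.2⟩
    have hn := intervalIntegral.norm_integral_le_of_norm_le_const hbd
    rw [Real.norm_eq_abs] at hn
    have habs : |(s : ℝ) * Δ - β| ≤ Δ := by
      rw [abs_le]; constructor <;> linarith
    have h5 : B * |(s : ℝ) * Δ - β| ≤ B * Δ := mul_le_mul_of_nonneg_left habs hB0
    have h6 : (B + 1) * Δ = B * Δ + Δ := by ring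
    linarith
  have hnum1 : β * K < ε / 2 := by
    have hd1 : (0:ℝ) < B * β + 1 := by nlinarith [mul_nonneg hB0 hβ.le]
    have hd2 : (0:ℝ) < β + 1 := by linarith
    have e1 : εμ * (B * β + 1) = εF := by
      rw [hεμdef, hεFdef]; field_simp
    have e2 : εF * (4 * (β + 1)) = ε := by
      rw [hεFdef]; field_simp
    have h5 : B * β * εμ ≤ εF := by nlinarith [hεμ.le]
    have h7 : β * εF < ε / 4 := by nlinarith [hεF]
    have h8 : β * (B * (β * εμ)) ≤ β * εF := by nlinarith [mul_le_mul_of_nonneg_left h5 hβ.le]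
    rw [hKdef]
    calc β * (B * (β * εμ) + εF) = β * (B * (β * εμ)) + β * εF := by ring
      _ ≤ β * εF + β * εF := by linarith
      _ < ε / 2 := by linarith
  have hnum2 : (B + 1) * Δ < ε / 2 := by
    rw [lt_div_iff₀ (by linarith : (0:ℝ) < 2 * (B + 1))] at hΔε
    linarith [show Δ * (2 * (B + 1)) = (B + 1) * Δ * 2 from by ring]
  calc |Δ * ∑ i ∈ Finset.Ico q s, g i - r|
      ≤ |∑ i ∈ Finset.range s, (Δ * g i - ∫ c in ((i : ℝ) * Δ)..(((i : ℝ) + 1) * Δ), F c)|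
        + |(∫ c in (0:ℝ)..((s : ℝ) * Δ), F c) - r| := by rw [hGr]; exact abs_add_le _ _
    _ < ε := by linarith
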